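/- In Γ = AΓL₁(q) with q = q₁^s and |φ^i| = s, if a, b ∈ F_q satisfy Tr_{F_q/F_{q₁}}(a) · Tr_{F_q/F_{q₁}}(b) ≠ 0, then (a,1)φ^i and (b,1)φ^i are conjugate by an element of F_q⁺ : F_{q₁}^×. -/

import Mathlib

/-- An element `(a, λ)·τ` of `Γ = AΓL₁(q) = (F_q⁺ : F_q^×) : ⟨φ⟩` is encoded as the triple
`(a, λ, τ) : F × F × (F ≃+* F)`, with the multiplication of the paper:
`(a,λ)φ^i (b,μ)φ^j = (a + λ⁻¹ b^{φ^{-i}}, λ μ^{φ^{-i}}) φ^{i+j}`. -/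
def agmul {F : Type*} [Field F] (x y : F × F × (F ≃+* F)) : F × F × (F ≃+* F) :=
  (x.1 + x.2.1⁻¹ * x.2.2.symm y.1, x.2.1 * x.2.2.symm y.2.1, x.2.2 * y.2.2)

/-- In `Γ = AΓL₁(q)` with `q = q₁^s`, `σ = φ^i` of order `s` (so `⟨σ⟩ = Gal(F_q/F_{q₁})` and
`Tr_{F_q/F_{q₁}}(a) = ∑_{k<s} σ^k(a)`): if `Tr(a)·Tr(b) ≠ 0`, then `(a,1)φ^i` and `(b,1)φ^i`
are conjugate by an element `(c,μ)` of `F_q⁺ : F_{q₁}^×` (so `μ ≠ 0` is fixed by `σ`,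
i.e. `μ ∈ F_{q₁}^×`). -/
theorem stmt_9 {F : Type*} [Field F] [Finite F] (σ : F ≃+* F) (s : ℕ)
    (hs : orderOf σ = s) (hs0 : 0 < s) (a b : F)
    (h : (∑ k ∈ Finset.range s, (σ ^ k) a) * (∑ k ∈ Finset.range s, (σ ^ k) b) ≠ 0) :
    ∃ c μ : F, μ ≠ 0 ∧ σ μ = μ ∧
      agmul (a, 1, σ) (c, μ, 1) = agmul (c, μ, 1) (b, 1, σ) := by
  classical
  have hσs : σ ^ s = 1 := by rw [← hs]; exact pow_orderOf_eq_one σ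
  set Tr : F →+ F := AddMonoidHom.mk' (fun x => ∑ k ∈ Finset.range s, (σ ^ k) x)
    (by intro x y; simp [map_add, Finset.sum_add_distrib]) with hTrdef
  set T : F →+ F := AddMonoidHom.mk' (fun x => x - σ.symm x)
    (by intro x y; simp [map_add]; ring) with hTdef
  have hTrapp : ∀ x, Tr x = ∑ k ∈ Finset.range s, (σ ^ k) x := fun x => rfl
  have hTapp : ∀ x, T x = x - σ.symm x := fun x => rfl
  -- Tr (σ x) = Tr x
  have hshift : ∀ x : F, Tr (σ x) = Tr x := by
    intro x
    have h1 := Finset.sum_range_succ' (fun k => (σ ^ k) x) s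
    have h2 := Finset.sum_range_succ (fun k => (σ ^ k) x) s
    have hss : (σ ^ s) x = (σ ^ 0) x := by rw [hσs]; rfl
    have : ∑ k ∈ Finset.range s, (σ ^ (k + 1)) x = ∑ k ∈ Finset.range s, (σ ^ k) x := by
      rw [h2, hss] at h1
      exact add_right_cancel h1.symm
    calc Tr (σ x) = ∑ k ∈ Finset.range s, (σ ^ (k + 1)) x := by
          rw [hTrapp]
          refine Finset.sum_congr rfl fun k _ => ?_
          rw [pow_succ]
          rfl
      _ = Tr x := by rw [this, hTrapp]
  have hTrsymm : ∀ x : F, Tr (σ.symm x) = Tr x := by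
    intro x
    conv_rhs => rw [← σ.apply_symm_apply x]
    rw [hshift]
  -- σ fixes Tr x
  have hTrfix : ∀ x : F, σ (Tr x) = Tr x := by
    intro x
    have : Tr x = ∑ k ∈ Finset.range s, (σ ^ k) x := hTrapp x
    rw [hTrapp, map_sum]
    have e : ∀ k, σ ((σ ^ k) x) = (σ ^ (k+1)) x := by
      intro k; rw [pow_succ']; rfl
    rw [Finset.sum_congr rfl fun k _ => e k]
    -- reuse shift computation
    have := hshift x
    rw [hTrapp, hTrapp] at this
    calc ∑ k ∈ Finset.range s, (σ ^ (k + 1)) x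
        = ∑ k ∈ Finset.range s, (σ ^ k) (σ x) := by
          refine Finset.sum_congr rfl fun k _ => ?_
          rw [pow_succ]
          rfl
      _ = ∑ k ∈ Finset.range s, (σ ^ k) x := this
  -- Tr is K-linear for σ-fixed scalars
  have hTrsmul : ∀ (μ x : F), σ μ = μ → Tr (μ * x) = μ * Tr x := by
    intro μ x hμ
    have hfix : ∀ k : ℕ, (σ ^ k) μ = μ := by
      intro k
      induction k with
      | zero => rfl
      | succ n ih => rw [pow_succ']; show σ ((σ ^ n) μ) = μ; rw [ih, hμ]
    rw [hTrapp, hTrapp, Finset.mul_sum]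
    refine Finset.sum_congr rfl fun k _ => ?_
    rw [map_mul, hfix]
  set A := Tr a with hA
  set B := Tr b with hB
  have hA0 : A ≠ 0 := fun h0 => h (by rw [← hTrapp, ← hA, h0, zero_mul])
  have hB0 : B ≠ 0 := fun h0 => h (by rw [← hTrapp a, ← hTrapp b, ← hA, ← hB, h0, mul_zero])
  -- kernel of T is set of σ-fixed points
  have hkerT : ∀ x : F, x ∈ T.ker ↔ σ x = x := by
    intro x
    rw [AddMonoidHom.mem_ker, hTapp, sub_eq_zero]
    constructor
    · intro hx
      have := congrArg σ hx
      rw [σ.apply_symm_apply] at this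
      exact this
    · intro hx
      have := congrArg σ.symm hx
      rw [σ.symm_apply_apply] at this
      exact this
  -- range Tr = ker T
  have hrangeTr : Tr.range = T.ker := by
    ext y
    constructor
    · rintro ⟨x, rfl⟩
      rw [hkerT]
      exact hTrfix x
    · intro hy
      rw [hkerT] at hy
      refine ⟨(y * A⁻¹) * a, ?_⟩
      have hμ : σ (y * A⁻¹) = y * A⁻¹ := by
        rw [map_mul, map_inv₀, hy, hTrfix]
      rw [hTrsmul _ _ hμ, ← hA]
      field_simp
  -- range T ≤ ker Tr
  have hrange_le : T.range ≤ Tr.ker := by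
    rintro _ ⟨x, rfl⟩
    rw [AddMonoidHom.mem_ker, hTapp, map_sub, hTrsymm, sub_self]
  -- cardinality bookkeeping
  have card_mul : ∀ f : F →+ F, Nat.card f.range * Nat.card f.ker = Nat.card F := by
    intro f
    rw [← Nat.card_congr (QuotientAddGroup.quotientKerEquivRange f).toEquiv]
    exact (AddSubgroup.card_eq_card_quotient_mul_card_addSubgroup f.ker).symm
  have hcards : Nat.card T.range = Nat.card Tr.ker := by
    have h1 := card_mul T
    have h2 := card_mul Tr
    rw [hrangeTr] at h2
    have hk : Nat.card T.ker ≠ 0 := Nat.card_pos.ne'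
    have : Nat.card T.range * Nat.card T.ker = Nat.card Tr.ker * Nat.card T.ker := by
      rw [h1, ← h2, mul_comm]
    exact Nat.eq_of_mul_eq_mul_right (Nat.pos_of_ne_zero hk) this
  have hrange_eq : T.range = Tr.ker :=
    AddSubgroup.eq_of_le_of_card_ge hrange_le (le_of_eq hcards.symm)
  -- now construct μ and c
  set μ := B / A with hμdef
  have hμ0 : μ ≠ 0 := div_ne_zero hB0 hA0
  have hμfix : σ μ = μ := by
    rw [hμdef, map_div₀, hB, hA, hTrfix, hTrfix]
  have hx0 : a - μ⁻¹ * b ∈ Tr.ker := by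
    rw [AddMonoidHom.mem_ker, map_sub]
    have hμinvfix : σ μ⁻¹ = μ⁻¹ := by rw [map_inv₀, hμfix]
    rw [hTrsmul _ _ hμinvfix, ← hA, ← hB]
    rw [hμdef]
    field_simp
    ring
  rw [← hrange_eq] at hx0
  obtain ⟨c, hc⟩ := hx0
  rw [hTapp] at hc
  refine ⟨c, μ, hμ0, hμfix, ?_⟩
  have hμsymm : σ.symm μ = μ := by
    conv_lhs => rw [← hμfix]
    rw [σ.symm_apply_apply]
  simp only [agmul, Prod.mk.injEq]
  refine ⟨?_, ?_, ?_⟩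
  · show a + (1:F)⁻¹ * σ.symm c = c + μ⁻¹ * ((1 : F ≃+* F).symm b)
    have : (1 : F ≃+* F).symm b = b := rfl
    rw [this, inv_one, one_mul]
    have := hc
    -- c - σ.symm c = a - μ⁻¹ * b
    linear_combination -this
  · show (1:F) * σ.symm μ = μ * ((1 : F ≃+* F).symm 1)
    have : (1 : F ≃+* F).symm (1:F) = 1 := rfl
    rw [this, one_mul, mul_one, hμsymm]
  · show σ * 1 = 1 * σ
    rw [mul_one, one_mul]
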